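/- Let n be a positive integer and let S = [[λ, μ], [conj(μ), conj(λ)]] be a complex 2n×2n matrix of block form which is complex symplectic (Sᵀ J S = J with J = [[0, I], [−I, 0]]). Then λ is invertible and λλᴴ − I is positive semidefinite; in particular the operator norm of λ satisfies ‖λ‖ ≥ 1. -/

import Mathlib

open Matrix
open scoped Matrix.Norms.L2Operator ComplexOrder

/-- If `S = [[λ, μ], [conj μ, conj λ]]` is complex symplectic, then `λ` is
invertible, `λλᴴ − I` is positive semidefinite, and the (L2) operator norm `‖λ‖ ≥ 1`. -/
theorem symplectic_upperLeft_block_invertible (n : ℕ) (hn : 0 < n)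
    (lam mu : Matrix (Fin n) (Fin n) ℂ)
    (hS : (fromBlocks lam mu (mu.map (starRingEnd ℂ)) (lam.map (starRingEnd ℂ)))ᵀ *
        fromBlocks (0 : Matrix (Fin n) (Fin n) ℂ) (1 : Matrix (Fin n) (Fin n) ℂ)
          (-1 : Matrix (Fin n) (Fin n) ℂ) (0 : Matrix (Fin n) (Fin n) ℂ) *
        fromBlocks lam mu (mu.map (starRingEnd ℂ)) (lam.map (starRingEnd ℂ)) =
      fromBlocks (0 : Matrix (Fin n) (Fin n) ℂ) (1 : Matrix (Fin n) (Fin n) ℂ)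
        (-1 : Matrix (Fin n) (Fin n) ℂ) (0 : Matrix (Fin n) (Fin n) ℂ)) :
    IsUnit lam ∧ (lam * lamᴴ - 1).PosSemidef ∧ 1 ≤ ‖lam‖ := by
  -- Step 1: extract the key identity `lam * lamᴴ = 1 + mu * muᴴ`
  have hmap : ∀ A : Matrix (Fin n) (Fin n) ℂ, A.map (starRingEnd ℂ) = Aᴴᵀ := by
    intro A; ext i j; simp
  rw [hmap, hmap] at hS
  set S : Matrix (Fin n ⊕ Fin n) (Fin n ⊕ Fin n) ℂ := fromBlocks lam mu muᴴᵀ lamᴴᵀ with hSdef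
  have hJ : (fromBlocks (0 : Matrix (Fin n) (Fin n) ℂ) 1 (-1) 0) = -(J (Fin n) ℂ) := by
    rw [Matrix.J, Matrix.fromBlocks_neg]; norm_num
  rw [hJ] at hS
  have hmem : S ∈ symplecticGroup (Fin n) ℂ := by
    rw [SymplecticGroup.mem_iff']
    have h : Sᵀ * -J (Fin n) ℂ * S = -(Sᵀ * J (Fin n) ℂ * S) := by
      rw [Matrix.mul_neg, Matrix.neg_mul]
    rw [h] at hS
    exact neg_injective hS
  have h2 := SymplecticGroup.mem_iff.mp hmem
  have h3 := congrArg Matrix.toBlocks₁₂ h2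
  rw [hSdef] at h3
  rw [Matrix.J] at h3
  simp [fromBlocks_multiply, fromBlocks_transpose, toBlocks_fromBlocks₁₂] at h3
  have key : lam * lamᴴ = 1 + mu * muᴴ := by
    linear_combination (norm := abel1) -h3
  -- Step 2: positive semidefiniteness
  have hPS : (lam * lamᴴ - 1).PosSemidef := by
    have : lam * lamᴴ - 1 = mu * muᴴ := by rw [key]; abel
    rw [this]
    exact posSemidef_self_mul_conjTranspose mu
  -- Step 3: invertibility
  have hPD : (lam * lamᴴ).PosDef := by
    rw [key]
    exact Matrix.PosDef.one.add_posSemidef (posSemidef_self_mul_conjTranspose mu)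
  have hUnit : IsUnit lam := by
    rw [Matrix.isUnit_iff_isUnit_det]
    have := (Matrix.isUnit_iff_isUnit_det _).mp hPD.isUnit
    rw [Matrix.det_mul] at this
    exact isUnit_of_mul_isUnit_left this
  refine ⟨hUnit, hPS, ?_⟩
  -- Step 4: the norm bound
  set i : Fin n := ⟨0, hn⟩
  set v : Fin n → ℂ := Pi.single i 1 with hv
  set u : Fin n → ℂ := lamᴴ *ᵥ v with hu
  have hq := hPS.dotProduct_mulVec_nonneg v
  have hvv : star v ⬝ᵥ v = 1 := by
    simp [hv, dotProduct, Pi.single_apply, Finset.sum_ite_eq]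
  have huu : star v ⬝ᵥ ((lam * lamᴴ) *ᵥ v) = star u ⬝ᵥ u := by
    rw [← mulVec_mulVec, Matrix.dotProduct_mulVec, hu, star_mulVec, conjTranspose_conjTranspose]
  have h1 : (1 : ℂ) ≤ star u ⬝ᵥ u := by
    rw [sub_mulVec, one_mulVec, dotProduct_sub, huu, hvv] at hq
    exact sub_nonneg.mp hq
  have h2' : star u ⬝ᵥ u =
      ((‖(WithLp.equiv 2 (Fin n → ℂ)).symm u‖ : ℝ) : ℂ) ^ 2 := by
    rw [show star u ⬝ᵥ u = inner ℂ ((WithLp.equiv 2 (Fin n → ℂ)).symm u)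
        ((WithLp.equiv 2 (Fin n → ℂ)).symm u) by rw [dotProduct_comm]; rfl]
    exact inner_self_eq_norm_sq_to_K _
  have hnu : (1 : ℝ) ≤ ‖(WithLp.equiv 2 (Fin n → ℂ)).symm u‖ := by
    rw [h2'] at h1
    have := Complex.real_le_real.mp (by exact_mod_cast h1)
    nlinarith [norm_nonneg ((WithLp.equiv 2 (Fin n → ℂ)).symm u)]
  have hle : ‖(WithLp.equiv 2 (Fin n → ℂ)).symm u‖ ≤
      ‖lamᴴ‖ * ‖(EuclideanSpace.single i (1 : ℂ) : EuclideanSpace ℂ (Fin n))‖ :=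
    lamᴴ.l2_opNorm_mulVec (EuclideanSpace.single i (1 : ℂ))
  rw [EuclideanSpace.norm_single, norm_one, mul_one, l2_opNorm_conjTranspose] at hle
  linarith
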